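/- Let M be a conditional oriented matroid on I = [n] with the all-plus signed set X = (+,...,+) a symmetric circuit (so both X and −X are circuits), and suppose 0 < m < n. Define ỹ_i on covectors Y by ỹ_i(Y) = 1 if Y(i) ∈ {+,0} for i ≤ m, ỹ_i(Y) = 1 if Y(i) = + for i > m, and ỹ_i(Y) = 0 otherwise. Then for every covector Y ∈ M, ỹ_i(Y) is not identically 1 over all i, and not identically 0 over all i; i.e., there exist i₀, i₁ ∈ [n] with ỹ_{i₀}(Y) = 0 and ỹ_{i₁}(Y) = 1. -/
import Mathlib


/-- The composition `X ∘ Y` of signed subsets of `I`. -/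
def scomp {I : Type*} (X Y : I → SignType) : I → SignType :=
  fun i => if X i ≠ 0 then X i else Y i

/-- The separating set of two signed subsets. -/
def sepSet {I : Type*} (X Y : I → SignType) : Set I :=
  {i | X i = -(Y i) ∧ X i ≠ 0}

/-- A conditional oriented matroid on the ground set `I`. -/
structure IsCOM {I : Type*} (M : Set (I → SignType)) : Prop where
  faceSym : ∀ X ∈ M, ∀ Y ∈ M, scomp X (-Y) ∈ M
  strongElim : ∀ X ∈ M, ∀ Y ∈ M, ∀ i ∈ sepSet X Y,
    ∃ Z ∈ M, Z i = 0 ∧ ∀ j ∉ sepSet X Y, Z j = scomp X Y j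

/-- The flat (zero set) of a covector. -/
def sflat {I : Type*} (X : I → SignType) : Set I := {i | X i = 0}

/-- The collection of flats of a conditional oriented matroid. -/
def flats {I : Type*} (M : Set (I → SignType)) : Set (Set I) :=
  {F | ∃ X ∈ M, sflat X = F}

/-- `X` is a circuit of the conditional oriented matroid `M`: `X ∘ Y ≠ Y` for
all covectors `Y`, and every proper signed subset `Z` of `X` satisfies
`Z ∘ Y₀ = Y₀` for some covector `Y₀`. -/
def IsCircuit {I : Type*} (M : Set (I → SignType)) (X : I → SignType) : Prop :=
  (∀ Y ∈ M, scomp X Y ≠ Y) ∧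
  (∀ Z : I → SignType, (∀ i, Z i = 0 ∨ Z i = X i) → Z ≠ X →
    ∃ Y₀ ∈ M, scomp Z Y₀ = Y₀)

/-- The function `ỹ_i` of Lemma 4.4 for the all-plus circuit, with `J = [m]`:
`ỹ_i(Y) = 1` iff `Y(i) ∈ {+,0}` for `i ∈ J`, and iff `Y(i) = +` for
`i ∉ J`. -/
def tildeY (K : Type*) [Field K] {n : ℕ} (m : ℕ) (Y : Fin n → SignType)
    (i : Fin n) : K :=
  if (i.val < m ∧ (Y i = 1 ∨ Y i = 0)) ∨ (¬ i.val < m ∧ Y i = 1) then 1 else 0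

lemma scomp_mem {I : Type*} {M : Set (I → SignType)} (hM : IsCOM M)
    {A B : I → SignType} (hA : A ∈ M) (hB : B ∈ M) : scomp A B ∈ M := by
  have h1 := hM.faceSym A hA B hB
  have h2 := hM.faceSym A hA _ h1
  have : scomp A (-(scomp A (-B))) = scomp A B := by
    funext i
    simp only [scomp, Pi.neg_apply]
    by_cases h : A i = 0 <;> simp [h]
  rwa [this] at h2

lemma key {I : Type*} {M : Set (I → SignType)} (hM : IsCOM M)
    {X : I → SignType} (hX : IsCircuit M X) (hXfull : ∀ i, X i ≠ 0)
    {Y : I → SignType} (hY : Y ∈ M) (hsub : ∀ i, Y i = 0 ∨ Y i = X i)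
    (hne : ∃ i, Y i ≠ 0) : False := by
  set Z : I → SignType := fun i => if Y i = 0 then X i else 0 with hZ
  have hZsub : ∀ i, Z i = 0 ∨ Z i = X i := by
    intro i; by_cases h : Y i = 0 <;> simp [hZ, h]
  have hZne : Z ≠ X := by
    obtain ⟨i, hi⟩ := hne
    intro h
    have := congrFun h i
    simp [hZ, hi] at this
    exact hXfull i this.symm
  obtain ⟨Y₀, hY₀, hcomp⟩ := hX.2 Z hZsub hZne
  have hW : scomp Y Y₀ ∈ M := scomp_mem hM hY hY₀
  have hWX : scomp Y Y₀ = X := by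
    funext i
    by_cases h : Y i = 0
    · have := congrFun hcomp i
      simp only [scomp, hZ, h, if_true, hXfull i, ne_eq, not_false_iff, if_pos] at this ⊢
      rw [← this]
      simp [hXfull i]
    · simp only [scomp, h, ne_eq, not_false_iff, if_pos]
      exact (hsub i).resolve_left h
  exact hX.1 _ hW (by rw [hWX]; funext i; simp [scomp, hXfull i])

/-- if the all-plus signed set on `[n]` is a symmetric circuit of
`M` and `0 < m < n`, then for every covector `Y ∈ M` the values `ỹ_i(Y)` are
neither identically `1` nor identically `0`: there are `i₀, i₁` with
`ỹ_{i₀}(Y) = 0` and `ỹ_{i₁}(Y) = 1`. -/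
theorem two_values_attained (K : Type*) [Field K] {n : ℕ}
    {M : Set (Fin n → SignType)} (hM : IsCOM M)
    (hplus : IsCircuit M (fun _ => 1))
    (hminus : IsCircuit M (fun _ => -1))
    {m : ℕ} (hm0 : 0 < m) (hmn : m < n) :
    ∀ Y ∈ M, (∃ i₀ : Fin n, tildeY K m Y i₀ = 0) ∧
      (∃ i₁ : Fin n, tildeY K m Y i₁ = 1) := by
  intro Y hY
  constructor
  · by_contra h
    push_neg at h
    have hcond : ∀ i : Fin n,
        (i.val < m ∧ (Y i = 1 ∨ Y i = 0)) ∨ (¬ i.val < m ∧ Y i = 1) := by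
      intro i
      by_contra hc
      exact h i (by simp only [tildeY]; rw [if_neg hc])
    have hsub : ∀ i, Y i = 0 ∨ Y i = (fun _ => (1 : SignType)) i := by
      intro i
      rcases hcond i with ⟨_, h1 | h0⟩ | ⟨_, h1⟩
      · exact Or.inr h1
      · exact Or.inl h0
      · exact Or.inr h1
    have hne : ∃ i, Y i ≠ 0 := by
      refine ⟨⟨m, hmn⟩, ?_⟩
      rcases hcond ⟨m, hmn⟩ with ⟨hlt, _⟩ | ⟨_, h1⟩
      · exact absurd hlt (lt_irrefl m)
      · simp [h1]
    exact key hM hplus (fun i => by simp) hY hsub hne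
  · by_contra h
    push_neg at h
    have hcond : ∀ i : Fin n,
        ¬ ((i.val < m ∧ (Y i = 1 ∨ Y i = 0)) ∨ (¬ i.val < m ∧ Y i = 1)) := by
      intro i hc
      exact h i (by simp only [tildeY]; rw [if_pos hc])
    have hsub : ∀ i, Y i = 0 ∨ Y i = (fun _ => (-1 : SignType)) i := by
      intro i
      have hc := hcond i
      push_neg at hc
      by_cases hi : i.val < m
      · rcases (hc.1 hi) with ⟨h1, h0⟩
        cases hYi : Y i <;> simp_all
      · have h1 := hc.2 (le_of_not_gt hi)
        cases hYi : Y i <;> simp_all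
    have hne : ∃ i, Y i ≠ 0 := by
      refine ⟨⟨0, hm0.trans hmn⟩, ?_⟩
      have hc := hcond ⟨0, hm0.trans hmn⟩
      push_neg at hc
      rcases hc.1 hm0 with ⟨h1, h0⟩
      exact h0
    exact key hM hminus (fun i => by simp) hY hsub hne
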